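/- For every r with 0 < r < 8/5, there is a continuous map f : S¹ × S¹ → ℝ² × ℝ² such that for every (θ₁, θ₂) ∈ S¹ × S¹, the two closed segments of length r with centers f(θ₁,θ₂)₁ and f(θ₁,θ₂)₂ and directions θ₁ and θ₂ respectively are disjoint and both contained in the closed unit disk of ℝ². (Two segments of any length less than 1.6 can spin independently in the unit disk.) -/

import Mathlib

noncomputable section

open scoped RealInnerProductSpace

/-- Rotation by 90 degrees as a linear map on the Euclidean plane. -/
def Jrot : EuclideanSpace ℝ (Fin 2) →ₗ[ℝ] EuclideanSpace ℝ (Fin 2) where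
  toFun x := WithLp.toLp 2 ![-(x 1), x 0]
  map_add' x y := by ext i; fin_cases i <;> simp [Matrix.cons_val_zero, Matrix.cons_val_one] <;> ring
  map_smul' c x := by ext i; fin_cases i <;> simp [Matrix.cons_val_zero, Matrix.cons_val_one] <;> ring

lemma inner_Jrot_self (x : EuclideanSpace ℝ (Fin 2)) : ⟪Jrot x, x⟫ = 0 := by
  simp [Jrot, PiLp.inner_apply, Fin.sum_univ_two, Matrix.cons_val_zero, Matrix.cons_val_one]
  ring

lemma norm_Jrot (x : EuclideanSpace ℝ (Fin 2)) : ‖Jrot x‖ = ‖x‖ := by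
  simp only [EuclideanSpace.norm_eq, Fin.sum_univ_two, Jrot]
  simp [Matrix.cons_val_zero, Matrix.cons_val_one]
  ring_nf

theorem two_segments_spin_independently (r : ℝ) (hr0 : 0 < r) (hr1 : r < 8 / 5) :
    ∃ f : Metric.sphere (0 : EuclideanSpace ℝ (Fin 2)) 1 ×
          Metric.sphere (0 : EuclideanSpace ℝ (Fin 2)) 1 →
          EuclideanSpace ℝ (Fin 2) × EuclideanSpace ℝ (Fin 2),
      Continuous f ∧
      ∀ θ₁ θ₂ : Metric.sphere (0 : EuclideanSpace ℝ (Fin 2)) 1,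
        (∀ t ∈ Set.Icc (-(r / 2)) (r / 2),
          ‖(f (θ₁, θ₂)).1 + t • (θ₁ : EuclideanSpace ℝ (Fin 2))‖ ≤ 1 ∧
          ‖(f (θ₁, θ₂)).2 + t • (θ₂ : EuclideanSpace ℝ (Fin 2))‖ ≤ 1) ∧
        (∀ s ∈ Set.Icc (-(r / 2)) (r / 2), ∀ t ∈ Set.Icc (-(r / 2)) (r / 2),
          (f (θ₁, θ₂)).1 + s • (θ₁ : EuclideanSpace ℝ (Fin 2)) ≠
            (f (θ₁, θ₂)).2 + t • (θ₂ : EuclideanSpace ℝ (Fin 2))) := by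
  set a : ℝ := Real.sqrt (1 - r ^ 2 / 4) with ha
  have hr2 : r ^ 2 / 4 < 16 / 25 := by nlinarith
  have ha2 : a ^ 2 = 1 - r ^ 2 / 4 := Real.sq_sqrt (by nlinarith)
  have ha35 : 3 / 5 < a := by
    nlinarith [Real.sqrt_nonneg (1 - r ^ 2 / 4)]
  have hra : r < 1 + a := by linarith
  set b : ℝ := (1 - a) / 2 with hb
  refine ⟨fun p => (-b • Jrot (p.2 : EuclideanSpace ℝ (Fin 2)),
      a • Jrot (p.2 : EuclideanSpace ℝ (Fin 2))), ?_, ?_⟩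
  · have hJ : Continuous Jrot := Jrot.continuous_of_finiteDimensional
    have hc : Continuous fun p : Metric.sphere (0 : EuclideanSpace ℝ (Fin 2)) 1 ×
        Metric.sphere (0 : EuclideanSpace ℝ (Fin 2)) 1 =>
        Jrot (p.2 : EuclideanSpace ℝ (Fin 2)) :=
      hJ.comp (continuous_subtype_val.comp continuous_snd)
    exact (hc.const_smul (-b)).prodMk (hc.const_smul a)
  · intro θ₁ θ₂
    have hθ1 : ‖(θ₁ : EuclideanSpace ℝ (Fin 2))‖ = 1 := by
      have := θ₁.2; simpa [Metric.mem_sphere, dist_eq_norm] using this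
    have hθ2 : ‖(θ₂ : EuclideanSpace ℝ (Fin 2))‖ = 1 := by
      have := θ₂.2; simpa [Metric.mem_sphere, dist_eq_norm] using this
    have hJθ2 : ‖Jrot (θ₂ : EuclideanSpace ℝ (Fin 2))‖ = 1 := by
      rw [norm_Jrot]; exact hθ2
    constructor
    · rintro t ⟨ht1, ht2⟩
      have htabs : |t| ≤ r / 2 := abs_le.2 ⟨ht1, ht2⟩
      constructor
      · calc ‖-b • Jrot (θ₂ : EuclideanSpace ℝ (Fin 2)) + t • (θ₁ : EuclideanSpace ℝ (Fin 2))‖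
            ≤ ‖-b • Jrot (θ₂ : EuclideanSpace ℝ (Fin 2))‖ + ‖t • (θ₁ : EuclideanSpace ℝ (Fin 2))‖ :=
              norm_add_le _ _
          _ = |b| + |t| := by rw [norm_smul, norm_smul, hJθ2, hθ1]; simp [abs_neg]
          _ ≤ b + r / 2 := by
              have hb0 : 0 ≤ b := by rw [hb]; nlinarith [Real.sqrt_nonneg (1 - r^2/4), ha2]
              rw [abs_of_nonneg hb0]; linarith
          _ ≤ 1 := by rw [hb]; linarith
      · have hinner : ⟪a • Jrot (θ₂ : EuclideanSpace ℝ (Fin 2)),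
            t • (θ₂ : EuclideanSpace ℝ (Fin 2))⟫ = 0 := by
          rw [real_inner_smul_left, real_inner_smul_right, inner_Jrot_self]; ring
        have hinner' : ⟪t • (θ₂ : EuclideanSpace ℝ (Fin 2)),
            a • Jrot (θ₂ : EuclideanSpace ℝ (Fin 2))⟫ = 0 := by
          rw [real_inner_comm]; exact hinner
        have hsq : ‖a • Jrot (θ₂ : EuclideanSpace ℝ (Fin 2)) +
            t • (θ₂ : EuclideanSpace ℝ (Fin 2))‖ ^ 2 = a ^ 2 + t ^ 2 := by
          rw [← real_inner_self_eq_norm_sq, inner_add_add_self, hinner, hinner',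
            real_inner_self_eq_norm_sq, real_inner_self_eq_norm_sq,
            norm_smul, norm_smul, hJθ2, hθ2]
          have : 0 ≤ a := Real.sqrt_nonneg _
          rw [Real.norm_eq_abs, Real.norm_eq_abs, abs_of_nonneg this]
          ring_nf
          rw [sq_abs]
        have h1 : ‖a • Jrot (θ₂ : EuclideanSpace ℝ (Fin 2)) +
            t • (θ₂ : EuclideanSpace ℝ (Fin 2))‖ ^ 2 ≤ 1 := by
          rw [hsq]
          nlinarith [abs_le.2 ⟨ht1, ht2⟩, sq_abs t, abs_nonneg t]
        nlinarith [norm_nonneg (a • Jrot (θ₂ : EuclideanSpace ℝ (Fin 2)) +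
            t • (θ₂ : EuclideanSpace ℝ (Fin 2)))]
    · rintro s ⟨hs1, hs2⟩ t ⟨ht1, ht2⟩ heq
      have h := congrArg (fun x => ⟪x, Jrot (θ₂ : EuclideanSpace ℝ (Fin 2))⟫) heq
      simp only [inner_add_left, real_inner_smul_left] at h
      have hJJ : ⟪Jrot (θ₂ : EuclideanSpace ℝ (Fin 2)),
          Jrot (θ₂ : EuclideanSpace ℝ (Fin 2))⟫ = 1 := by
        rw [real_inner_self_eq_norm_sq, hJθ2]; norm_num
      have h22 : ⟪(θ₂ : EuclideanSpace ℝ (Fin 2)),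
          Jrot (θ₂ : EuclideanSpace ℝ (Fin 2))⟫ = 0 := by
        rw [real_inner_comm]; exact inner_Jrot_self _
      have h12 : |⟪(θ₁ : EuclideanSpace ℝ (Fin 2)),
          Jrot (θ₂ : EuclideanSpace ℝ (Fin 2))⟫| ≤ 1 := by
        calc |⟪(θ₁ : EuclideanSpace ℝ (Fin 2)), Jrot (θ₂ : EuclideanSpace ℝ (Fin 2))⟫|
            ≤ ‖(θ₁ : EuclideanSpace ℝ (Fin 2))‖ * ‖Jrot (θ₂ : EuclideanSpace ℝ (Fin 2))‖ :=
              abs_real_inner_le_norm _ _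
          _ = 1 := by rw [hθ1, hJθ2]; ring
      rw [hJJ, h22] at h
      -- h : -b * 1 + s * ⟪θ₁, Jθ₂⟫ = a * 1 + t * 0
      have habs : |s * ⟪(θ₁ : EuclideanSpace ℝ (Fin 2)),
          Jrot (θ₂ : EuclideanSpace ℝ (Fin 2))⟫| ≤ r / 2 := by
        rw [abs_mul]
        calc |s| * |⟪(θ₁ : EuclideanSpace ℝ (Fin 2)), Jrot (θ₂ : EuclideanSpace ℝ (Fin 2))⟫|
            ≤ |s| * 1 := by
              exact mul_le_mul_of_nonneg_left h12 (abs_nonneg s)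
          _ = |s| := mul_one _
          _ ≤ r / 2 := abs_le.2 ⟨hs1, hs2⟩
      have := abs_le.1 habs
      -- -b + s·⟪⟫ = a, but -b + s·⟪⟫ ≤ -b + r/2 < a
      have : -b * 1 + s * ⟪(θ₁ : EuclideanSpace ℝ (Fin 2)),
          Jrot (θ₂ : EuclideanSpace ℝ (Fin 2))⟫ < a * 1 + t * 0 := by
        have h2 := abs_le.1 habs
        rw [hb]; nlinarith
      linarith [h, this]
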